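/- Let $\{X_{n1},\dots,X_{nn}\}_{n\ge1}$ be a triangular array where for each $n$ the random variables $X_{n1},\dots,X_{nn}$ are i.i.d., nonnegative, with finite mean. Suppose $X_{n1}$ converges in distribution to a random variable $Z$ with $\mathbb{E}Z < \infty$ and $\lim_n \mathbb{E}X_{n1} = \mathbb{E}Z$. Then for every $\alpha > 1$, the normalized sum $S_\alpha = n^{-\alpha}(X_{n1}^\alpha + \cdots + X_{nn}^\alpha)$ converges to $0$ in probability. -/

import Mathlib

open MeasureTheory ProbabilityTheory Filter

/-- clamp function as a bounded continuous function -/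
noncomputable def clampBCF (K : ℝ) : BoundedContinuousFunction ℝ ℝ :=
  ⟨⟨fun x => max (min x K) 0, by continuity⟩, ⟨|K|, by
    intro x y
    have hx0 : (0:ℝ) ≤ max (min x K) 0 := le_max_right _ _
    have hxK : max (min x K) 0 ≤ |K| := max_le ((min_le_right _ _).trans (le_abs_self K)) (abs_nonneg K)
    have hy0 : (0:ℝ) ≤ max (min y K) 0 := le_max_right _ _
    have hyK : max (min y K) 0 ≤ |K| := max_le ((min_le_right _ _).trans (le_abs_self K)) (abs_nonneg K)
    rw [Real.dist_eq, abs_sub_le_iff]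
    constructor <;> simp only [ContinuousMap.coe_mk] <;> linarith⟩⟩

lemma clampBCF_apply (K x : ℝ) : clampBCF K x = max (min x K) 0 := rfl

lemma markov_real {Ω : Type*} [MeasurableSpace Ω] (μ : Measure Ω) {f : Ω → ℝ}
    (hf : ∀ ω, 0 ≤ f ω) (hint : Integrable f μ) {t : ℝ} (ht : 0 < t) :
    (μ {ω | t ≤ f ω}).toReal ≤ (∫ ω, f ω ∂μ) / t := by
  rw [le_div_iff₀ ht, mul_comm]
  exact mul_meas_ge_le_integral_of_nonneg (ae_of_all _ hf) hint t

lemma key_bound {Ω : Type*} [MeasurableSpace Ω] (μ : Measure Ω) [IsProbabilityMeasure μ]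
    (n : ℕ) (hn : 1 ≤ n) (X : ℕ → Ω → ℝ)
    (hmeas : ∀ i, Measurable (X i)) (hnonneg : ∀ i ω, 0 ≤ X i ω)
    (hident : ∀ i < n, μ.map (X i) = μ.map (X 0))
    (hint : Integrable (X 0) μ)
    {α ε c d : ℝ} (hα : 1 < α) (hε : 0 < ε) (hc : 0 < c) (hd : c ^ (α - 1) = d) :
    (μ {ω | ε < (n : ℝ) ^ (-α) * ∑ i ∈ Finset.range n, X i ω ^ α}).toReal ≤
      n * (μ {ω | c * n ≤ X 0 ω}).toReal + (∫ ω, X 0 ω ∂μ) * d / ε := by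
  have hd0 : 0 < d := hd ▸ Real.rpow_pos_of_pos hc _
  have hn0 : (0:ℝ) < n := by exact_mod_cast hn
  have hα1 : (0:ℝ) < α - 1 := by linarith
  -- integrability and integral identity for each column
  have intX : ∀ i < n, Integrable (X i) μ := by
    intro i hi
    have h1 : Integrable (id : ℝ → ℝ) (μ.map (X i)) := by
      rw [hident i hi,
        integrable_map_measure aestronglyMeasurable_id (hmeas 0).aemeasurable]
      exact hint
    rw [integrable_map_measure aestronglyMeasurable_id (hmeas i).aemeasurable] at h1
    exact h1
  have intval : ∀ i < n, ∫ ω, X i ω ∂μ = ∫ ω, X 0 ω ∂μ := by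
    intro i hi
    have h1 : ∫ x, id x ∂(μ.map (X i)) = ∫ x, id x ∂(μ.map (X 0)) := by
      rw [hident i hi]
    rwa [integral_map (hmeas i).aemeasurable aestronglyMeasurable_id,
      integral_map (hmeas 0).aemeasurable aestronglyMeasurable_id] at h1
  have intsum : Integrable (fun ω => ∑ i ∈ Finset.range n, X i ω) μ :=
    integrable_finset_sum _ (fun i hi => intX i (Finset.mem_range.mp hi))
  have sumval : ∫ ω, (∑ i ∈ Finset.range n, X i ω) ∂μ = n * ∫ ω, X 0 ω ∂μ := by
    rw [integral_finset_sum _ (fun i hi => intX i (Finset.mem_range.mp hi)),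
      Finset.sum_congr rfl (fun i hi => intval i (Finset.mem_range.mp hi)),
      Finset.sum_const, Finset.card_range, nsmul_eq_mul]
  set t : ℝ := ε * n / d with htdef
  have ht : 0 < t := by positivity
  -- set inclusion
  have hsub : {ω | ε < (n : ℝ) ^ (-α) * ∑ i ∈ Finset.range n, X i ω ^ α} ⊆
      (⋃ i ∈ Finset.range n, {ω | c * n ≤ X i ω}) ∪
        {ω | t ≤ ∑ i ∈ Finset.range n, X i ω} := by
    intro ω hω
    rcases em (∃ i ∈ Finset.range n, c * n ≤ X i ω) with h | h
    · left
      obtain ⟨i, hi, hix⟩ := h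
      exact Set.mem_biUnion hi hix
    · right
      push_neg at h
      by_contra hcon
      have hsumlt : ∑ i ∈ Finset.range n, X i ω < t := lt_of_not_ge hcon
      have hterm : ∀ i ∈ Finset.range n, X i ω ^ α ≤ d * (n:ℝ) ^ (α - 1) * X i ω := by
        intro i hi
        rcases eq_or_lt_of_le (hnonneg i ω) with h0 | h0
        · rw [← h0, Real.zero_rpow (by linarith), mul_zero]
        · have h1 : X i ω ^ α = X i ω ^ (α - 1) * X i ω := by
            rw [← Real.rpow_add_one (ne_of_gt h0) (α - 1)]
            ring_nf
          rw [h1]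
          have h2 : X i ω ^ (α - 1) ≤ (c * n) ^ (α - 1) :=
            Real.rpow_le_rpow (le_of_lt h0) (le_of_lt (h i hi)) (le_of_lt hα1)
          have h3 : (c * n) ^ (α - 1) = d * (n:ℝ) ^ (α - 1) := by
            rw [Real.mul_rpow (le_of_lt hc) (le_of_lt hn0), hd]
          rw [h3] at h2
          exact mul_le_mul_of_nonneg_right h2 (le_of_lt h0)
      have hsum1 : ∑ i ∈ Finset.range n, X i ω ^ α ≤
          d * (n:ℝ) ^ (α - 1) * ∑ i ∈ Finset.range n, X i ω := by
        rw [Finset.mul_sum]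
        exact Finset.sum_le_sum hterm
      have hpow : (0:ℝ) < (n:ℝ) ^ (α - 1) := Real.rpow_pos_of_pos hn0 _
      have hsum2 : ∑ i ∈ Finset.range n, X i ω ^ α < ε * (n:ℝ) ^ α := by
        calc ∑ i ∈ Finset.range n, X i ω ^ α
            ≤ d * (n:ℝ) ^ (α - 1) * ∑ i ∈ Finset.range n, X i ω := hsum1
          _ < d * (n:ℝ) ^ (α - 1) * t := by
              apply mul_lt_mul_of_pos_left hsumlt (by positivity)
          _ = ε * ((n:ℝ) ^ (α - 1) * (n:ℝ)) := by
              rw [htdef]; field_simp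
          _ = ε * (n:ℝ) ^ α := by
              rw [← Real.rpow_add_one (ne_of_gt hn0) (α - 1)]; ring_nf
      have hna : (0:ℝ) < (n:ℝ) ^ (-α) := Real.rpow_pos_of_pos hn0 _
      have : (n:ℝ) ^ (-α) * ∑ i ∈ Finset.range n, X i ω ^ α <
          (n:ℝ) ^ (-α) * (ε * (n:ℝ) ^ α) := mul_lt_mul_of_pos_left hsum2 hna
      have hcancel : (n:ℝ) ^ (-α) * (ε * (n:ℝ) ^ α) = ε := by
        rw [mul_comm ε, ← mul_assoc, ← Real.rpow_add hn0]
        simp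
      rw [hcancel] at this
      exact absurd hω (by simpa using not_lt.mpr (le_of_lt this))
  -- measure bound
  have h1 : μ {ω | ε < (n : ℝ) ^ (-α) * ∑ i ∈ Finset.range n, X i ω ^ α} ≤
      (∑ i ∈ Finset.range n, μ {ω | c * n ≤ X i ω}) +
        μ {ω | t ≤ ∑ i ∈ Finset.range n, X i ω} :=
    (measure_mono hsub).trans ((measure_union_le _ _).trans
      (add_le_add (measure_biUnion_finset_le _ _) le_rfl))
  have h2 : ∀ i ∈ Finset.range n, μ {ω | c * n ≤ X i ω} = μ {ω | c * n ≤ X 0 ω} := by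
    intro i hi
    have : μ ((X i) ⁻¹' Set.Ici (c * n)) = μ ((X 0) ⁻¹' Set.Ici (c * n)) := by
      rw [← Measure.map_apply (hmeas i) measurableSet_Ici,
        hident i (Finset.mem_range.mp hi),
        Measure.map_apply (hmeas 0) measurableSet_Ici]
    simpa [Set.preimage, Set.mem_Ici] using this
  rw [Finset.sum_congr rfl h2, Finset.sum_const, Finset.card_range, nsmul_eq_mul] at h1
  have h3 : (μ {ω | ε < (n : ℝ) ^ (-α) * ∑ i ∈ Finset.range n, X i ω ^ α}).toReal ≤
      n * (μ {ω | c * n ≤ X 0 ω}).toReal +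
        (μ {ω | t ≤ ∑ i ∈ Finset.range n, X i ω}).toReal := by
    have hfin1 : (n : ENNReal) * μ {ω | c * n ≤ X 0 ω} ≠ ⊤ :=
      ENNReal.mul_ne_top (ENNReal.natCast_ne_top n) (measure_ne_top _ _)
    have := ENNReal.toReal_mono (ENNReal.add_ne_top.mpr ⟨hfin1, measure_ne_top _ _⟩) h1
    rwa [ENNReal.toReal_add hfin1 (measure_ne_top _ _), ENNReal.toReal_mul,
      ENNReal.toReal_natCast] at this
  -- Markov on the sum
  have h4 : (μ {ω | t ≤ ∑ i ∈ Finset.range n, X i ω}).toReal ≤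
      (∫ ω, X 0 ω ∂μ) * d / ε := by
    have := markov_real μ (fun ω => Finset.sum_nonneg (fun i _ => hnonneg i ω)) intsum ht
    rw [sumval] at this
    refine this.trans (le_of_eq ?_)
    rw [htdef]
    field_simp
  linarith [h3, h4]
lemma tail_bound {Ω : Type*} [MeasurableSpace Ω] (μ : Measure Ω) [IsProbabilityMeasure μ]
    {f : Ω → ℝ} (hf : Integrable f μ) {c K : ℝ} (hc : 0 < c) (hK : 0 ≤ K) (n : ℕ)
    (hn : 2 * K ≤ c * n) (hn1 : 1 ≤ n) :
    (n : ℝ) * (μ {ω | c * n ≤ f ω}).toReal ≤ (2 / c) * ∫ ω, max (f ω - K) 0 ∂μ := by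
  have hn0 : (0:ℝ) < n := by exact_mod_cast hn1
  have hthalf : 0 < c * n / 2 := by positivity
  have hthr : c * n / 2 ≤ c * n - K := by linarith
  have hthr0 : 0 < c * n - K := lt_of_lt_of_le hthalf hthr
  have hintpos : Integrable (fun ω => max (f ω - K) 0) μ :=
    (hf.sub (integrable_const K)).pos_part
  have hE0 : 0 ≤ ∫ ω, max (f ω - K) 0 ∂μ :=
    integral_nonneg (fun ω => le_max_right _ _)
  have hsub : {ω | c * n ≤ f ω} ⊆ {ω | c * n - K ≤ max (f ω - K) 0} := by
    intro ω hω
    simp only [Set.mem_setOf_eq] at hω ⊢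
    exact le_trans (by linarith) (le_max_left _ _)
  have h1 : (μ {ω | c * n ≤ f ω}).toReal ≤
      (∫ ω, max (f ω - K) 0 ∂μ) / (c * n - K) :=
    le_trans (ENNReal.toReal_mono (measure_ne_top _ _) (measure_mono hsub))
      (markov_real μ (fun ω => le_max_right _ _) hintpos hthr0)
  have h2 : (∫ ω, max (f ω - K) 0 ∂μ) / (c * n - K) ≤
      (∫ ω, max (f ω - K) 0 ∂μ) / (c * n / 2) := by
    gcongr
  have h3 : (n : ℝ) * ((∫ ω, max (f ω - K) 0 ∂μ) / (c * n / 2)) =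
      (2 / c) * ∫ ω, max (f ω - K) 0 ∂μ := by
    field_simp
  calc (n : ℝ) * (μ {ω | c * n ≤ f ω}).toReal
      ≤ (n : ℝ) * ((∫ ω, max (f ω - K) 0 ∂μ) / (c * n / 2)) := by
        exact mul_le_mul_of_nonneg_left (h1.trans h2) hn0.le
    _ = (2 / c) * ∫ ω, max (f ω - K) 0 ∂μ := h3
lemma clamp_tendsto {Ω' : Type*} [MeasurableSpace Ω'] (ν : Measure Ω') [IsProbabilityMeasure ν]
    {Z : Ω' → ℝ} (hZmeas : Measurable Z) (hZint : Integrable Z ν) :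
    Tendsto (fun m : ℕ => ∫ ω, clampBCF m (Z ω) ∂ν) atTop
      (nhds (∫ ω, max (Z ω) 0 ∂ν)) := by
  apply tendsto_integral_of_dominated_convergence (fun ω => |Z ω|)
  · intro m
    exact (((clampBCF m).continuous.measurable).comp hZmeas).aestronglyMeasurable
  · exact hZint.abs
  · intro m
    refine ae_of_all _ (fun ω => ?_)
    rw [clampBCF_apply, Real.norm_eq_abs,
      abs_of_nonneg (le_max_right _ _)]
    exact max_le ((min_le_left _ _).trans (le_abs_self _)) (abs_nonneg _)
  · refine ae_of_all _ (fun ω => ?_)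
    apply tendsto_const_nhds.congr'
    filter_upwards [eventually_ge_atTop ⌈Z ω⌉₊] with m hm
    rw [clampBCF_apply, min_eq_left ((Nat.le_ceil _).trans (by exact_mod_cast hm))]

theorem stmt_5 {Ω : ℕ → Type*} [∀ n, MeasurableSpace (Ω n)]
    (μ : ∀ n, Measure (Ω n)) [∀ n, IsProbabilityMeasure (μ n)]
    {Ω' : Type*} [MeasurableSpace Ω'] (ν : Measure Ω') [IsProbabilityMeasure ν]
    (X : (n : ℕ) → ℕ → Ω n → ℝ) (Z : Ω' → ℝ)
    (hmeas : ∀ n i, Measurable (X n i))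
    (hnonneg : ∀ n i ω, 0 ≤ X n i ω)
    (hindep : ∀ n, iIndepFun (fun i : Fin n => X n i.1) (μ n))
    (hident : ∀ n, ∀ i < n, (μ n).map (X n i) = (μ n).map (X n 0))
    (hint : ∀ n, 0 < n → Integrable (X n 0) (μ n))
    (hZmeas : Measurable Z) (hZint : Integrable Z ν)
    (hdistr : ∀ f : BoundedContinuousFunction ℝ ℝ,
      Tendsto (fun n => ∫ ω, f (X n 0 ω) ∂(μ n)) atTop (nhds (∫ ω, f (Z ω) ∂ν)))
    (hmean : Tendsto (fun n => ∫ ω, X n 0 ω ∂(μ n)) atTop (nhds (∫ ω, Z ω ∂ν))) :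
    ∀ α : ℝ, 1 < α → ∀ ε : ℝ, 0 < ε →
      Tendsto (fun n =>
          ((μ n) {ω | ε < (n : ℝ) ^ (-α) * ∑ i ∈ Finset.range n, X n i ω ^ α}).toReal)
        atTop (nhds 0) := by
  intro α hα ε hε
  have hα1 : (0:ℝ) < α - 1 := by linarith
  set L : ℝ := ∫ ω, Z ω ∂ν with hLdef
  have hL0 : 0 ≤ L :=
    ge_of_tendsto hmean (Eventually.of_forall fun n =>
      integral_nonneg (fun ω => hnonneg n 0 ω))
  refine tendsto_order.2 ⟨fun b hb => Eventually.of_forall fun n =>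
    lt_of_lt_of_le hb ENNReal.toReal_nonneg, fun δ hδ => ?_⟩
  -- choose constants
  set d : ℝ := min 1 (ε * δ / (2 * (L + 2))) with hddef
  have hd0 : 0 < d := lt_min one_pos (by positivity)
  have hd2 : d ≤ ε * δ / (2 * (L + 2)) := min_le_right _ _
  set c : ℝ := d ^ (α - 1)⁻¹ with hcdef
  have hc0 : 0 < c := Real.rpow_pos_of_pos hd0 _
  have hcd : c ^ (α - 1) = d := Real.rpow_inv_rpow hd0.le (ne_of_gt hα1)
  -- choose K
  have hZplus : L ≤ ∫ ω, max (Z ω) 0 ∂ν :=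
    integral_mono hZint hZint.pos_part (fun ω => le_max_left _ _)
  obtain ⟨K, hK⟩ : ∃ K : ℕ, L - c * δ / 8 < ∫ ω, clampBCF K (Z ω) ∂ν :=
    ((clamp_tendsto ν hZmeas hZint).eventually_const_lt
      (by nlinarith [hZplus, show (0:ℝ) < c * δ / 8 by positivity])).exists
  -- eventual bounds
  have EvA : ∀ᶠ n in atTop, (∫ ω, X n 0 ω ∂(μ n)) < L + 1 :=
    hmean.eventually_lt_const (by linarith)
  have EvB : ∀ᶠ n in atTop,
      (∫ ω, X n 0 ω ∂(μ n)) - (∫ ω, clampBCF K (X n 0 ω) ∂(μ n)) < c * δ / 8 :=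
    (hmean.sub (hdistr (clampBCF K))).eventually_lt_const (by linarith)
  filter_upwards [EvA, EvB, eventually_ge_atTop 1,
    eventually_ge_atTop ⌈2 * (K : ℝ) / c⌉₊] with n hA hB hn1 hn2
  have hn0 : (0:ℝ) < n := by exact_mod_cast hn1
  have hKc : 2 * (K : ℝ) ≤ c * n := by
    have h := Nat.ceil_le.mp hn2
    rw [div_le_iff₀ hc0] at h
    linarith [h]
  -- apply key bounds
  have key := key_bound (μ n) n hn1 (X n) (hmeas n) (hnonneg n)
    (hident n) (hint n hn1) hα hε hc0 hcd
  have tail := tail_bound (μ n) (hint n hn1) hc0 (Nat.cast_nonneg K) n hKc hn1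
  -- compute the positive-part integral
  have hclampint : Integrable (fun ω => clampBCF K (X n 0 ω)) (μ n) := by
    refine (integrable_const (K:ℝ)).mono'
      (((clampBCF K).continuous.measurable).comp (hmeas n 0)).aestronglyMeasurable
      (ae_of_all _ (fun ω => ?_))
    rw [clampBCF_apply, Real.norm_eq_abs, abs_of_nonneg (le_max_right _ _)]
    exact max_le (min_le_right _ _) (Nat.cast_nonneg K)
  have hposint : ∫ ω, max (X n 0 ω - K) 0 ∂(μ n) =
      (∫ ω, X n 0 ω ∂(μ n)) - (∫ ω, clampBCF K (X n 0 ω) ∂(μ n)) := by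
    rw [← integral_sub (hint n hn1) hclampint]
    refine integral_congr_ae (ae_of_all _ (fun ω => ?_))
    simp only [clampBCF_apply]
    have h0 := hnonneg n 0 ω
    have hK0 : (0:ℝ) ≤ (K:ℝ) := Nat.cast_nonneg K
    rcases le_total (X n 0 ω) (K : ℝ) with h | h
    · rw [min_eq_left h, max_eq_left h0, max_eq_right (sub_nonpos.mpr h), sub_self]
    · rw [min_eq_right h, max_eq_left hK0,
        max_eq_left (by linarith : (0:ℝ) ≤ X n 0 ω - (K:ℝ))]
  have hE : ∫ ω, max (X n 0 ω - K) 0 ∂(μ n) < c * δ / 8 := by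
    rw [hposint]; exact hB
  have hE0 : 0 ≤ ∫ ω, max (X n 0 ω - K) 0 ∂(μ n) :=
    integral_nonneg (fun ω => le_max_right _ _)
  have hg0 : 0 ≤ ∫ ω, X n 0 ω ∂(μ n) := integral_nonneg (fun ω => hnonneg n 0 ω)
  -- assemble
  have h5 : (2 / c) * ∫ ω, max (X n 0 ω - K) 0 ∂(μ n) < (2 / c) * (c * δ / 8) :=
    mul_lt_mul_of_pos_left hE (by positivity)
  have h6 : (2 / c) * (c * δ / 8) = δ / 4 := by field_simp; ring
  have h7 : (∫ ω, X n 0 ω ∂(μ n)) * d / ε ≤ (L + 1) * d / ε := by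
    gcongr
  have h8 : (L + 1) * d / ε < δ / 2 := by
    rw [div_lt_iff₀ hε]
    have he : (ε * δ / (2 * (L + 2))) * (2 * (L + 2)) = ε * δ := by
      field_simp
    nlinarith [mul_pos hε hδ, hd2, hd0, hL0]
  have hnp : (0:ℝ) ≤ (n : ℝ) * ((μ n) {ω | c * n ≤ X n 0 ω}).toReal := by positivity
  linarith [key, tail, h5, h6, h7, h8]
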